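/- Hartigan's prior family equals the Rényi prior family with equal parameters: the prior defined by ∂_i log π_{α_H} = (g_F⁻¹)^{jk} [ α_H C_{ijk} + Γ^{(e)}_{ijk} ] coincides (up to a multiplicative constant) with the covolume cov^{(ρ)} satisfying ∂_i log cov^{(ρ)} = Γ^{(ρ)j}_{ji} where Γ^{(ρ)}_{ijk} = ρΓ^{(e)}_{ijk} + ρ²C_{ijk} (first kind w.r.t. the metric ρg^F), precisely when α_H = ρ. -/
import Mathlib


open BigOperators Matrix

/-- Hartigan's prior family is precisely the Rényi prior family: the defining ODE
`∂_i log π_{α_H} = (g_F⁻¹)^{jk}[α_H C_{ijk} + Γ^{(e)}_{ijk}]` for Hartigan's prior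
coincides with the parallelity ODE `∂_i log cov^{(ρ)} = Γ^{(ρ)j}_{ji}` for the Rényi
covolume (where `Γ^{(ρ)j}_{ik} = (g_F⁻¹)^{jℓ}(Γ^{(e)}_{ikℓ} + ρ C_{ikℓ})`)
if and only if `α_H = ρ`. -/
theorem stmt15 {n : ℕ}
    (gInv : (Fin n → ℝ) → Matrix (Fin n) (Fin n) ℝ)  -- inverse Fisher metric (g_F⁻¹)^{jk}
    (C Γe : (Fin n → ℝ) → Fin n → Fin n → Fin n → ℝ)
    -- total symmetry of the Amari–Chentsov tensor
    (hCsymm₁ : ∀ θ i j k, C θ i j k = C θ j i k)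
    (hCsymm₂ : ∀ θ i j k, C θ i j k = C θ i k j)
    -- symmetry of the exponential connection coefficients in the first two indices
    (hGesymm : ∀ θ i j k, Γe θ i j k = Γe θ j i k)
    -- nondegeneracy: the contracted Amari–Chentsov tensor does not vanish identically
    (hnd : ∃ (i : Fin n) (θ : Fin n → ℝ), (∑ j, ∑ k, gInv θ j k * C θ i j k) ≠ 0)
    (ρ αH : ℝ) :
    (∀ (i : Fin n) (θ : Fin n → ℝ),
        -- Hartigan's defining right-hand side for ∂_i log π_{α_H}
        (∑ j, ∑ k, gInv θ j k * (αH * C θ i j k + Γe θ i j k)) =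
        -- trace of the second-kind Rényi connection Γ^{(ρ)j}_{ji}
        (∑ j, ∑ l, gInv θ j l * (Γe θ j i l + ρ * C θ j i l)))
      ↔ αH = ρ := by
  have key : ∀ (i : Fin n) (θ : Fin n → ℝ),
      (∑ j, ∑ k, gInv θ j k * (αH * C θ i j k + Γe θ i j k)) -
      (∑ j, ∑ l, gInv θ j l * (Γe θ j i l + ρ * C θ j i l)) =
      (αH - ρ) * ∑ j, ∑ k, gInv θ j k * C θ i j k := by
    intro i θ
    rw [Finset.mul_sum, ← Finset.sum_sub_distrib]
    refine Finset.sum_congr rfl fun j _ => ?_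
    rw [Finset.mul_sum, ← Finset.sum_sub_distrib]
    refine Finset.sum_congr rfl fun k _ => ?_
    rw [hGesymm θ j i k, hCsymm₁ θ j i k]
    ring
  constructor
  · intro h
    obtain ⟨i, θ, hne⟩ := hnd
    have := key i θ
    rw [h i θ, sub_self] at this
    have := this.symm
    rcases mul_eq_zero.mp this with h0 | h0
    · linarith [sub_eq_zero.mp h0]
    · exact absurd h0 hne
  · intro h i θ
    subst h
    have := key i θ
    rw [sub_self, zero_mul] at this
    linarith
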